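/- On the surface S_p, the identity −w·(w−p)·(κ1 + κ2|w|^2 + κ2|w−p|^2 + κ2|p|^2) = E(w)E(p−w) − κ2 |w|^2 |p−w|^2 holds for every w ∈ S_p. -/

import Mathlib

noncomputable def Edisp (κ1 κ2 : ℝ) (p : EuclideanSpace ℝ (Fin 3)) : ℝ :=
  Real.sqrt (κ1 * ‖p‖ ^ 2 + κ2 * ‖p‖ ^ 4)

lemma Edisp_sq (κ1 κ2 : ℝ) (hκ1 : 0 < κ1) (hκ2 : 0 < κ2)
    (q : EuclideanSpace ℝ (Fin 3)) :
    Edisp κ1 κ2 q ^ 2 = κ1 * ‖q‖ ^ 2 + κ2 * ‖q‖ ^ 4 := by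
  unfold Edisp
  rw [Real.sq_sqrt]
  have h1 : 0 ≤ ‖q‖ ^ 2 := sq_nonneg _
  nlinarith [pow_le_pow_left₀ (norm_nonneg q) (le_refl ‖q‖) 4, sq_nonneg (‖q‖^2)]

/-- On the surface `S_p`, for every `w ∈ S_p`:
`−w·(w−p)·(κ1 + κ2|w|² + κ2|w−p|² + κ2|p|²) = E(w)E(p−w) − κ2 |w|² |p−w|²`. -/
theorem surface_identity (κ1 κ2 : ℝ) (hκ1 : 0 < κ1) (hκ2 : 0 < κ2)
    (p : EuclideanSpace ℝ (Fin 3)) (hp : p ≠ 0)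
    (w : EuclideanSpace ℝ (Fin 3))
    (hw : Edisp κ1 κ2 (p - w) + Edisp κ1 κ2 w = Edisp κ1 κ2 p) :
    -(inner ℝ w (w - p) : ℝ) *
        (κ1 + κ2 * ‖w‖ ^ 2 + κ2 * ‖w - p‖ ^ 2 + κ2 * ‖p‖ ^ 2) =
      Edisp κ1 κ2 w * Edisp κ1 κ2 (p - w) - κ2 * ‖w‖ ^ 2 * ‖p - w‖ ^ 2 := by
  have hA := Edisp_sq κ1 κ2 hκ1 hκ2 w
  have hB := Edisp_sq κ1 κ2 hκ1 hκ2 (p - w)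
  have hC := Edisp_sq κ1 κ2 hκ1 hκ2 p
  have hsq : (Edisp κ1 κ2 (p - w) + Edisp κ1 κ2 w) ^ 2 = Edisp κ1 κ2 p ^ 2 := by
    rw [hw]
  have hnorm : ‖w - p‖ = ‖p - w‖ := norm_sub_rev w p
  have hpw : ‖p - w‖ ^ 2 = ‖p‖ ^ 2 - 2 * (inner ℝ p w : ℝ) + ‖w‖ ^ 2 :=
    norm_sub_sq_real p w
  have hinner : (inner ℝ w (w - p) : ℝ) = ‖w‖ ^ 2 - (inner ℝ p w : ℝ) := by
    rw [inner_sub_right, real_inner_self_eq_norm_sq, real_inner_comm]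
  have hAB : Edisp κ1 κ2 w * Edisp κ1 κ2 (p - w) =
      (κ1 * ‖p‖ ^ 2 + κ2 * ‖p‖ ^ 4 - κ1 * ‖w‖ ^ 2 - κ2 * ‖w‖ ^ 4
        - κ1 * ‖p - w‖ ^ 2 - κ2 * ‖p - w‖ ^ 4) / 2 := by
    linear_combination hsq / 2 - hA / 2 - hB / 2 + hC / 2
  rw [hinner, hnorm]
  linear_combination (κ1 + κ2 * ‖w‖ ^ 2 + κ2 * ‖p - w‖ ^ 2 + κ2 * ‖p‖ ^ 2) / 2 * hpw - hAB
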